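/- The following identity holds for the 3-hyperbolic functions, for all x, l, t ∈ ℂ: s_1(x)s_1(l−t)s_2(l) − s_1(x)s_2(l−t)s_1(l) + s_2(x)s_2(l−t)s_0(l) − s_2(x)s_1(l−t)s_1(l) = s_2(−t)s_2(x−l) − s_2(x−t)s_2(−l). -/
import Mathlib


open Complex Finset

noncomputable def zeta3 : ℂ := Complex.exp (2 * Real.pi * Complex.I / 3)

noncomputable def s3 (k : ℕ) (z : ℂ) : ℂ :=
  (1 / 3) * ∑ m ∈ Finset.range 3, ((zeta3 ^ m)⁻¹) ^ k * Complex.exp (z * zeta3 ^ m)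

theorem s3_resolvent_identity (x l t : ℂ) :
    s3 1 x * s3 1 (l - t) * s3 2 l - s3 1 x * s3 2 (l - t) * s3 1 l +
    s3 2 x * s3 2 (l - t) * s3 0 l - s3 2 x * s3 1 (l - t) * s3 1 l =
    s3 2 (-t) * s3 2 (x - l) - s3 2 (x - t) * s3 2 (-l) := by
  have hprim : IsPrimitiveRoot zeta3 3 := by
    have := Complex.isPrimitiveRoot_exp 3 (by norm_num)
    simpa [zeta3] using this
  have hw3 : zeta3 ^ 3 = 1 := hprim.pow_eq_one
  have hne : zeta3 ≠ 1 := hprim.ne_one (by norm_num)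
  have hw : zeta3 ^ 2 + zeta3 + 1 = 0 := by
    have h : (zeta3 - 1) * (zeta3 ^ 2 + zeta3 + 1) = 0 := by linear_combination hw3
    rcases mul_eq_zero.mp h with h' | h'
    · exact absurd (sub_eq_zero.mp h') hne
    · exact h'
  have hz0 : zeta3 ≠ 0 := by
    rw [zeta3]; exact Complex.exp_ne_zero _
  have hinv1 : zeta3⁻¹ = zeta3 ^ 2 := by
    field_simp
    linear_combination -hw3
  have hinv2 : (zeta3 ^ 2)⁻¹ = zeta3 := by
    rw [inv_eq_iff_eq_inv, hinv1]
  have hzsq : ∀ z : ℂ, Complex.exp (z * zeta3 ^ 2) =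
      (Complex.exp z)⁻¹ * (Complex.exp (z * zeta3))⁻¹ := by
    intro z
    rw [← Complex.exp_neg, ← Complex.exp_neg, ← Complex.exp_add]
    congr 1
    linear_combination z * hw
  simp only [s3, Finset.sum_range_succ, Finset.sum_range_zero, pow_zero, pow_one, mul_one,
    one_mul, inv_one, one_pow, zero_add, sub_mul, neg_mul, Complex.exp_sub, Complex.exp_neg,
    div_eq_mul_inv, hinv1, hinv2, hzsq, mul_inv, inv_inv]
  set A := Complex.exp x with hAdef
  set A1 := Complex.exp (x * zeta3) with hA1def
  set B := Complex.exp l with hBdef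
  set B1 := Complex.exp (l * zeta3) with hB1def
  set T := Complex.exp t with hTdef
  set T1 := Complex.exp (t * zeta3) with hT1def
  have hA : A * A⁻¹ = 1 := mul_inv_cancel₀ (Complex.exp_ne_zero x)
  have hA1 : A1 * A1⁻¹ = 1 := mul_inv_cancel₀ (Complex.exp_ne_zero _)
  have hB : B * B⁻¹ = 1 := mul_inv_cancel₀ (Complex.exp_ne_zero l)
  have hB1 : B1 * B1⁻¹ = 1 := mul_inv_cancel₀ (Complex.exp_ne_zero _)
  have hT : T * T⁻¹ = 1 := mul_inv_cancel₀ (Complex.exp_ne_zero t)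
  have hT1 : T1 * T1⁻¹ = 1 := mul_inv_cancel₀ (Complex.exp_ne_zero _)
  linear_combination (((0 : ℂ)/1) + ((1 : ℂ)/9)*A1*B1⁻¹*T*T1 + ((-1 : ℂ)/9)*A1*B*B⁻¹*B1⁻¹*T*T1 + ((-1 : ℂ)/9)*A⁻¹*A1⁻¹*B1⁻¹*T*T1 + ((1 : ℂ)/9)*A⁻¹*A1⁻¹*B⁻¹*T*T1 + ((-1 : ℂ)/9)*A⁻¹*A1⁻¹*B⁻¹*B1*B1⁻¹*T*T1 + ((1 : ℂ)/9)*A⁻¹*A1⁻¹*B*B⁻¹*B1⁻¹*T*T1 + ((-1 : ℂ)/9)*A*B⁻¹*T*T1 + ((1 : ℂ)/9)*A*B⁻¹*B1*B1⁻¹*T*T1 + ((1 : ℂ)/27)*A*B*B1*T⁻¹ + ((1 : ℂ)/27)*A*B*B⁻¹*B1⁻¹*T⁻¹ + ((1 : ℂ)/9)*zeta3*A1*B1⁻¹*T⁻¹ + ((-1 : ℂ)/9)*zeta3*A1*B1⁻¹*T*T1 + ((-1 : ℂ)/9)*zeta3*A1*B⁻¹*T1⁻¹ + ((1 : ℂ)/9)*zeta3*A1*B⁻¹*B1*B1⁻¹*T1⁻¹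 + ((-1 : ℂ)/9)*zeta3*A1*B*B⁻¹*B1⁻¹*T⁻¹ + ((1 : ℂ)/9)*zeta3*A1*B*B⁻¹*B1⁻¹*T*T1 + ((1 : ℂ)/9)*zeta3*A⁻¹*A1⁻¹*B1⁻¹*T*T1 + ((-1 : ℂ)/9)*zeta3*A⁻¹*A1⁻¹*B*B⁻¹*B1⁻¹*T*T1 + ((-1 : ℂ)/9)*zeta3*A*B1⁻¹*T⁻¹ + ((1 : ℂ)/9)*zeta3*A*B⁻¹*T1⁻¹ + ((-1 : ℂ)/9)*zeta3*A*B⁻¹*B1*B1⁻¹*T1⁻¹ + ((-1 : ℂ)/27)*zeta3*A*B*B1*T⁻¹ + ((-1 : ℂ)/9)*zeta3^2*A1*B1⁻¹*T⁻¹ + ((1 : ℂ)/9)*zeta3^2*A1*B⁻¹*T1⁻¹ + ((-1 : ℂ)/9)*zeta3^2*A1*B⁻¹*B1*B1⁻¹*T1⁻¹ + ((1 : ℂ)/9)*zeta3^2*A1*B*B⁻¹*B1⁻¹*T⁻¹ + ((1 : ℂ)/9)*zeta3^2*A⁻¹*A1⁻¹*B⁻¹*B1*B1⁻¹*T*T1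 + ((-2 : ℂ)/27)*zeta3^2*A⁻¹*A1⁻¹*B*B1*T⁻¹ + ((1 : ℂ)/27)*zeta3^2*A⁻¹*A1⁻¹*B*B⁻¹*B1⁻¹*T*T1 + ((1 : ℂ)/9)*zeta3^2*A*B1⁻¹*T⁻¹ + ((-1 : ℂ)/9)*zeta3^2*A*B⁻¹*T1⁻¹ + ((1 : ℂ)/9)*zeta3^2*A*B⁻¹*B1*B1⁻¹*T1⁻¹ + ((-2 : ℂ)/27)*zeta3^2*A*B⁻¹*B1*B1⁻¹*T*T1 + ((1 : ℂ)/27)*zeta3^2*A*B*B1*T⁻¹ + ((1 : ℂ)/9)*zeta3^3*A1*B1⁻¹*T*T1 + ((-1 : ℂ)/27)*zeta3^3*A1*B*B⁻¹*B1⁻¹*T⁻¹ + ((-2 : ℂ)/27)*zeta3^3*A1*B*B⁻¹*B1⁻¹*T*T1 + ((-1 : ℂ)/9)*zeta3^3*A⁻¹*A1⁻¹*B1⁻¹*T*T1 + ((-1 : ℂ)/9)*zeta3^3*A⁻¹*A1⁻¹*B⁻¹*B1*B1⁻¹*T*T1 + ((1 : ℂ)/27)*zeta3^3*A⁻¹*A1⁻¹*B*B1*T1⁻¹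 + ((1 : ℂ)/27)*zeta3^3*A⁻¹*A1⁻¹*B*B1*T⁻¹ + ((-1 : ℂ)/27)*zeta3^3*A*B⁻¹*B1*B1⁻¹*T1⁻¹ + ((1 : ℂ)/27)*zeta3^3*A*B⁻¹*B1*B1⁻¹*T*T1 + ((-1 : ℂ)/9)*zeta3^4*A1*B1⁻¹*T*T1 + ((1 : ℂ)/9)*zeta3^4*A1*B⁻¹*B1*B1⁻¹*T1⁻¹ + ((1 : ℂ)/27)*zeta3^4*A1*B*B1*T1⁻¹ + ((1 : ℂ)/27)*zeta3^4*A1*B*B⁻¹*B1⁻¹*T*T1 + ((1 : ℂ)/9)*zeta3^4*A⁻¹*A1⁻¹*B1⁻¹*T*T1 + ((1 : ℂ)/27)*zeta3^4*A⁻¹*A1⁻¹*B⁻¹*B1*B1⁻¹*T*T1 + ((-2 : ℂ)/27)*zeta3^4*A⁻¹*A1⁻¹*B*B1*T1⁻¹ + ((-1 : ℂ)/9)*zeta3^5*A1*B⁻¹*B1*B1⁻¹*T1⁻¹ + ((-1 : ℂ)/27)*zeta3^5*A1*B*B1*T1⁻¹ + ((1 : ℂ)/27)*zeta3^6*A1*B⁻¹*B1*B1⁻¹*T1⁻¹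 + ((1 : ℂ)/27)*zeta3^6*A1*B*B1*T1⁻¹) * hw +
    (((0 : ℂ)/1)) * hA +
    (((0 : ℂ)/1)) * hA1 +
    (((0 : ℂ)/1) + ((1 : ℂ)/9)*A1*B1⁻¹*T*T1 + ((-1 : ℂ)/9)*A⁻¹*A1⁻¹*B1⁻¹*T*T1 + ((1 : ℂ)/9)*zeta3*A1*B1⁻¹*T⁻¹ + ((-1 : ℂ)/9)*zeta3*A*B1⁻¹*T⁻¹) * hB +
    (((0 : ℂ)/1) + ((1 : ℂ)/9)*A⁻¹*A1⁻¹*B⁻¹*T*T1 + ((-1 : ℂ)/9)*A*B⁻¹*T*T1 + ((-1 : ℂ)/9)*zeta3*A1*B⁻¹*T1⁻¹ + ((1 : ℂ)/9)*zeta3*A⁻¹*A1⁻¹*B⁻¹*T*T1 + ((1 : ℂ)/9)*zeta3*A*B⁻¹*T1⁻¹ + ((-1 : ℂ)/9)*zeta3*A*B⁻¹*T*T1) * hB1 +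
    (((0 : ℂ)/1)) * hT +
    (((0 : ℂ)/1)) * hT1
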